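/- Let S ⊆ ℝⁿ be C²-pointed at s̄ ∈ S with respect to (G, K): that is, K ⊆ ℝ^m is closed and convex with T_K(G(s̄)) ∩ (−T_K(G(s̄))) = {0}, U is an open neighborhood of s̄, G : U → ℝⁿ → ℝ^m is twice continuously differentiable on U with DG(s̄) surjective, and S ∩ U = {s ∈ U : G(s) ∈ K}. Then: (a) for every sequence s_k ∈ S with s_k → s̄, the subspaces ker(DG(s_k)) converge to ker(DG(s̄)) in the Painlevé–Kuratowski sense; and (b) there exist δ > 0, M > 0 and a neighborhood V of s̄ such that for every s ∈ S ∩ V and every v ∈ ker(DG(s)) with ‖v‖ = 1 there exists a map r : [0,δ] → ℝⁿ with ‖r(t)‖ ≤ M and s + t v + (t²/2) r(t) ∈ S for all t ∈ [0,δ]. -/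

import Mathlib

open Filter Topology Set
open scoped Pointwise

section Aux

variable {E F : Type*} [NormedAddCommGroup E] [NormedSpace ℝ E]
  [NormedAddCommGroup F] [NormedSpace ℝ F]

lemma seg_norm_sub_le {x y a z : E} (hz : z ∈ segment ℝ x y) :
    ‖z - a‖ ≤ max ‖x - a‖ ‖y - a‖ := by
  obtain ⟨p, q, hp, hq, hpq, rfl⟩ := hz
  have h1 : p • x + q • y - a = p • (x - a) + q • (y - a) := by
    have : a = p • a + q • a := by rw [← add_smul, hpq, one_smul]
    rw [smul_sub, smul_sub]
    nth_rewrite 1 [this]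
    abel
  rw [h1]
  calc ‖p • (x - a) + q • (y - a)‖ ≤ ‖p • (x - a)‖ + ‖q • (y - a)‖ := norm_add_le _ _
    _ = p * ‖x - a‖ + q * ‖y - a‖ := by
        rw [norm_smul, norm_smul, Real.norm_of_nonneg hp, Real.norm_of_nonneg hq]
    _ ≤ p * max ‖x - a‖ ‖y - a‖ + q * max ‖x - a‖ ‖y - a‖ := by
        gcongr
        · exact le_max_left _ _
        · exact le_max_right _ _
    _ = max ‖x - a‖ ‖y - a‖ := by rw [← add_mul, hpq, one_mul]

lemma segMVT {g : E → F} {g' : E → (E →L[ℝ] F)} (φ : E →L[ℝ] F) {x y : E} {c : ℝ}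
    (hd : ∀ z ∈ segment ℝ x y, HasFDerivAt g (g' z) z)
    (hb : ∀ z ∈ segment ℝ x y, ‖g' z - φ‖ ≤ c) :
    ‖g y - g x - φ (y - x)‖ ≤ c * ‖y - x‖ := by
  have h1 : ∀ z ∈ segment ℝ x y,
      HasFDerivWithinAt (fun w => g w - φ w) (g' z - φ) (segment ℝ x y) z :=
    fun z hz => ((hd z hz).sub (φ.hasFDerivAt)).hasFDerivWithinAt
  have h2 := (convex_segment x y).norm_image_sub_le_of_norm_hasFDerivWithin_le h1 hb
    (left_mem_segment ℝ x y) (right_mem_segment ℝ x y)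
  have h3 : (g y - φ y) - (g x - φ x) = g y - g x - φ (y - x) := by
    rw [map_sub]; abel
  rw [h3] at h2
  exact h2

end Aux

/-- The tangent cone of a convex set `K` at `y`: the closure of `⋃_{t>0} t • (K - y)`. -/
def tangentConeSet {m : ℕ} (K : Set (EuclideanSpace ℝ (Fin m))) (y : EuclideanSpace ℝ (Fin m)) :
    Set (EuclideanSpace ℝ (Fin m)) :=
  closure (⋃ t ∈ Set.Ioi (0 : ℝ), t • ((fun z => z - y) '' K))

/-- Painlevé–Kuratowski convergence of a sequence of sets to a limit set. -/
def PKConv {E : Type*} [TopologicalSpace E] (S : ℕ → Set E) (L : Set E) : Prop :=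
  (∀ x ∈ L, ∃ u : ℕ → E, (∀ k, u k ∈ S k) ∧ Tendsto u atTop (𝓝 x)) ∧
  (∀ u : ℕ → E, (∀ k, u k ∈ S k) → ∀ p, MapClusterPt p atTop u → p ∈ L)

set_option maxHeartbeats 4000000 in
theorem stmt12 {n m : ℕ} (S : Set (EuclideanSpace ℝ (Fin n)))
    (sbar : EuclideanSpace ℝ (Fin n)) (hsbar : sbar ∈ S)
    (K : Set (EuclideanSpace ℝ (Fin m))) (hKc : IsClosed K) (hKconv : Convex ℝ K)
    (U : Set (EuclideanSpace ℝ (Fin n))) (hU : IsOpen U) (hsbarU : sbar ∈ U)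
    (G : EuclideanSpace ℝ (Fin n) → EuclideanSpace ℝ (Fin m))
    (G' : EuclideanSpace ℝ (Fin n) → (EuclideanSpace ℝ (Fin n) →L[ℝ] EuclideanSpace ℝ (Fin m)))
    (G'' : EuclideanSpace ℝ (Fin n) →
      (EuclideanSpace ℝ (Fin n) →L[ℝ] EuclideanSpace ℝ (Fin n) →L[ℝ] EuclideanSpace ℝ (Fin m)))
    (hG' : ∀ x ∈ U, HasFDerivAt G (G' x) x)
    (hG'' : ∀ x ∈ U, HasFDerivAt G' (G'' x) x)
    (hG''cont : ContinuousOn G'' U)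
    (hpointed : tangentConeSet K (G sbar) ∩ (-(tangentConeSet K (G sbar))) = {0})
    (hsurj : Function.Surjective (G' sbar))
    (hSrep : S ∩ U = {s ∈ U | G s ∈ K}) :
    (∀ sk : ℕ → EuclideanSpace ℝ (Fin n), (∀ k, sk k ∈ S) → Tendsto sk atTop (𝓝 sbar) →
      PKConv (fun k => (LinearMap.ker (G' (sk k) : EuclideanSpace ℝ (Fin n) →ₗ[ℝ] EuclideanSpace ℝ (Fin m)) : Set (EuclideanSpace ℝ (Fin n))))
        (LinearMap.ker (G' sbar : EuclideanSpace ℝ (Fin n) →ₗ[ℝ] EuclideanSpace ℝ (Fin m)) : Set (EuclideanSpace ℝ (Fin n)))) ∧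
    (∃ δ > (0 : ℝ), ∃ M > (0 : ℝ), ∃ V ∈ 𝓝 sbar,
      ∀ s ∈ S ∩ V, ∀ v : EuclideanSpace ℝ (Fin n), v ∈ LinearMap.ker (G' s : EuclideanSpace ℝ (Fin n) →ₗ[ℝ] EuclideanSpace ℝ (Fin m)) → ‖v‖ = 1 →
        ∃ r : ℝ → EuclideanSpace ℝ (Fin n),
          ∀ t ∈ Set.Icc (0 : ℝ) δ, ‖r t‖ ≤ M ∧ s + t • v + (t ^ 2 / 2) • r t ∈ S) := by
  classical
  -- a continuous linear right inverse `B` of `G' sbar`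
  obtain ⟨B₀, hB₀⟩ := (G' sbar).toLinearMap.exists_rightInverse_of_surjective
    (LinearMap.range_eq_top.2 hsurj)
  set B := LinearMap.toContinuousLinearMap B₀ with hBdef
  have hAB : ∀ y, G' sbar (B y) = y := fun y => LinearMap.congr_fun hB₀ y
  obtain ⟨c₀, hc₀def⟩ : ∃ c : ℝ, c = 2 * (‖B‖ + 1) := ⟨_, rfl⟩
  have hc₀ : 0 < c₀ := by rw [hc₀def]; positivity
  obtain ⟨θ, hθdef⟩ : ∃ c : ℝ, c = 1 / c₀ := ⟨_, rfl⟩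
  have hθpos : 0 < θ := by rw [hθdef]; exact div_pos one_pos hc₀
  -- uniform right inverses near `sbar`
  have hRI : ∀ s, ‖G' s - G' sbar‖ ≤ θ →
      ∃ R : EuclideanSpace ℝ (Fin m) →L[ℝ] EuclideanSpace ℝ (Fin n),
        (∀ y, G' s (R y) = y) ∧ ‖R‖ ≤ c₀ := by
    intro s hs
    set T : EuclideanSpace ℝ (Fin m) →L[ℝ] EuclideanSpace ℝ (Fin m) := (G' s).comp B with hTdef
    set Ee : EuclideanSpace ℝ (Fin m) →L[ℝ] EuclideanSpace ℝ (Fin m) :=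
      (G' s - G' sbar).comp B with hEdef
    have hid : (G' sbar).comp B = 1 := by
      ext y
      simp [hAB y]
    have hT : T = 1 + Ee := by
      rw [hTdef, hEdef, ContinuousLinearMap.sub_comp, hid]
      abel
    have hE2 : ‖Ee‖ ≤ 1 / 2 := by
      calc ‖Ee‖ ≤ ‖G' s - G' sbar‖ * ‖B‖ := ContinuousLinearMap.opNorm_comp_le _ _
        _ ≤ θ * ‖B‖ := by gcongr
        _ ≤ 1 / 2 := by
            rw [hθdef, hc₀def]
            rw [div_mul_eq_mul_div, one_mul, div_le_div_iff₀ (by positivity) (by norm_num)]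
            nlinarith [norm_nonneg B]
    have hEneg : ‖-Ee‖ < 1 := by rw [norm_neg]; linarith
    set u := Units.oneSub (-Ee) hEneg with hudef
    have hu : (u : EuclideanSpace ℝ (Fin m) →L[ℝ] EuclideanSpace ℝ (Fin m)) = T := by
      rw [hudef, Units.val_oneSub, sub_neg_eq_add, hT]
    set W : EuclideanSpace ℝ (Fin m) →L[ℝ] EuclideanSpace ℝ (Fin m) := ↑u⁻¹ with hWdef
    have hTW : T * W = 1 := by rw [← hu, hWdef]; exact u.mul_inv
    have hW1 : W = 1 - Ee * W := by
      have h4 : (1 + Ee) * W = 1 := by rw [← hT]; exact hTW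
      rw [add_mul, one_mul] at h4
      exact (eq_sub_of_add_eq h4)
    have hWnorm : ‖W‖ ≤ 2 := by
      have h5 : ‖W‖ ≤ ‖(1 : EuclideanSpace ℝ (Fin m) →L[ℝ] EuclideanSpace ℝ (Fin m))‖
          + ‖Ee‖ * ‖W‖ := by
        nth_rewrite 1 [hW1]
        exact (norm_sub_le _ _).trans (by gcongr; exact norm_mul_le _ _)
      have h6 : ‖(1 : EuclideanSpace ℝ (Fin m) →L[ℝ] EuclideanSpace ℝ (Fin m))‖ ≤ 1 := by
        rw [ContinuousLinearMap.one_def]; exact ContinuousLinearMap.norm_id_le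
      nlinarith [norm_nonneg W, hE2]
    refine ⟨B.comp W, ?_, ?_⟩
    · intro y
      have := ContinuousLinearMap.ext_iff.1 hTW y
      simpa [ContinuousLinearMap.mul_apply, hTdef, ContinuousLinearMap.comp_apply] using this
    · calc ‖B.comp W‖ ≤ ‖B‖ * ‖W‖ := ContinuousLinearMap.opNorm_comp_le _ _
        _ ≤ ‖B‖ * 2 := mul_le_mul_of_nonneg_left hWnorm (norm_nonneg B)
        _ ≤ c₀ := by rw [hc₀def]; nlinarith [norm_nonneg B]
  have hG'cont : ∀ x ∈ U, ContinuousAt G' x := fun x hx => (hG'' x hx).continuousAt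
  refine ⟨?_, ?_⟩
  · -- Part (a)
    intro sk hskS hsklim
    have hlim : Tendsto (fun k => G' (sk k)) atTop (𝓝 (G' sbar)) :=
      ((hG'cont sbar hsbarU).tendsto).comp hsklim
    have hnorm0 : Tendsto (fun k => ‖G' (sk k) - G' sbar‖) atTop (𝓝 0) :=
      tendsto_iff_norm_sub_tendsto_zero.1 hlim
    constructor
    · intro x hx
      have hxker : G' sbar x = 0 := LinearMap.mem_ker.1 hx
      refine ⟨fun k => (Submodule.orthogonalProjectionOnto (LinearMap.ker (G' (sk k) : EuclideanSpace ℝ (Fin n) →ₗ[ℝ] EuclideanSpace ℝ (Fin m))) x :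
        EuclideanSpace ℝ (Fin n)), fun k => (Submodule.orthogonalProjectionOnto _ x).2, ?_⟩
      rw [← tendsto_sub_nhds_zero_iff]
      apply squeeze_zero_norm'
        (a := fun k => c₀ * (‖G' (sk k) - G' sbar‖ * ‖x‖))
      · filter_upwards [hnorm0.eventually (gt_mem_nhds hθpos)] with k hk
        obtain ⟨R, hRinv, hRn⟩ := hRI (sk k) hk.le
        set w := x - R (G' (sk k) x) with hwdef
        have hw : w ∈ LinearMap.ker (G' (sk k) : EuclideanSpace ℝ (Fin n) →ₗ[ℝ] EuclideanSpace ℝ (Fin m)) := by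
          simp [hwdef, map_sub, hRinv]
        have hle : ‖x - (Submodule.orthogonalProjectionOnto (LinearMap.ker (G' (sk k) : EuclideanSpace ℝ (Fin n) →ₗ[ℝ] EuclideanSpace ℝ (Fin m))) x :
            EuclideanSpace ℝ (Fin n))‖ ≤ ‖x - w‖ := by
          rw [← Submodule.starProjection_apply, Submodule.starProjection_minimal]
          exact ciInf_le ⟨0, by rintro _ ⟨z, rfl⟩; exact norm_nonneg _⟩
            (⟨w, hw⟩ : LinearMap.ker (G' (sk k) : EuclideanSpace ℝ (Fin n) →ₗ[ℝ] EuclideanSpace ℝ (Fin m)))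
        have hxw : x - w = R (G' (sk k) x) := by rw [hwdef]; abel
        calc ‖(Submodule.orthogonalProjectionOnto (LinearMap.ker (G' (sk k) : EuclideanSpace ℝ (Fin n) →ₗ[ℝ] EuclideanSpace ℝ (Fin m))) x :
              EuclideanSpace ℝ (Fin n)) - x‖
            = ‖x - (Submodule.orthogonalProjectionOnto (LinearMap.ker (G' (sk k) : EuclideanSpace ℝ (Fin n) →ₗ[ℝ] EuclideanSpace ℝ (Fin m))) x :
              EuclideanSpace ℝ (Fin n))‖ := norm_sub_rev _ _
          _ ≤ ‖x - w‖ := hle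
          _ = ‖R (G' (sk k) x)‖ := by rw [hxw]
          _ ≤ ‖R‖ * ‖G' (sk k) x‖ := R.le_opNorm _
          _ ≤ c₀ * ‖G' (sk k) x‖ := by
              exact mul_le_mul_of_nonneg_right hRn (norm_nonneg _)
          _ = c₀ * ‖(G' (sk k) - G' sbar) x‖ := by
              rw [ContinuousLinearMap.sub_apply, hxker, sub_zero]
          _ ≤ c₀ * (‖G' (sk k) - G' sbar‖ * ‖x‖) := by
              exact mul_le_mul_of_nonneg_left ((G' (sk k) - G' sbar).le_opNorm x) hc₀.le
      · have : Tendsto (fun k => c₀ * (‖G' (sk k) - G' sbar‖ * ‖x‖)) atTop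
            (𝓝 (c₀ * (0 * ‖x‖))) := ((hnorm0.mul_const ‖x‖).const_mul c₀)
        simpa using this
    · intro u hu p hp
      obtain ⟨ψ, hψ, hψlim⟩ := TopologicalSpace.FirstCountableTopology.tendsto_subseq hp
      have h1 : Tendsto (fun j => (G' (sk (ψ j)), u (ψ j))) atTop (𝓝 (G' sbar, p)) :=
        (hlim.comp hψ.tendsto_atTop).prodMk_nhds hψlim
      have h2 : Tendsto (fun j => (G' (sk (ψ j))) (u (ψ j))) atTop (𝓝 ((G' sbar) p)) :=
        (isBoundedBilinearMap_apply.continuous.tendsto _).comp h1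
      have h3 : (fun j => (G' (sk (ψ j))) (u (ψ j))) = fun _ => (0 : EuclideanSpace ℝ (Fin m)) :=
        funext fun j => LinearMap.mem_ker.1 (hu (ψ j))
      rw [h3] at h2
      exact LinearMap.mem_ker.2 (tendsto_nhds_unique h2 tendsto_const_nhds)
  · -- Part (b)
    obtain ⟨ρ, hρ0, hρU⟩ : ∃ ρ > (0:ℝ), Metric.closedBall sbar ρ ⊆ U := by
      obtain ⟨ρ', hρ'0, h⟩ := Metric.isOpen_iff.1 hU sbar hsbarU
      exact ⟨ρ' / 2, by linarith, fun z hz =>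
        h (lt_of_le_of_lt (Metric.mem_closedBall.1 hz) (by linarith))⟩
    obtain ⟨C₀, hC₀⟩ := IsCompact.exists_bound_of_continuousOn (f := G'') (isCompact_closedBall sbar ρ)
      (hG''cont.mono hρU)
    obtain ⟨C, hCdef⟩ : ∃ c : ℝ, c = max C₀ 1 := ⟨_, rfl⟩
    have hC1 : (1:ℝ) ≤ C := hCdef ▸ le_max_right _ _
    have hCpos : (0:ℝ) < C := lt_of_lt_of_le one_pos hC1
    have hCb : ∀ z ∈ Metric.closedBall sbar ρ, ‖G'' z‖ ≤ C := fun z hz =>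
      (hC₀ z hz).trans (hCdef ▸ le_max_left _ _)
    have hlip : ∀ x ∈ Metric.closedBall sbar ρ, ∀ y ∈ Metric.closedBall sbar ρ,
        ‖G' y - G' x‖ ≤ C * ‖y - x‖ := by
      intro x hx y hy
      exact (convex_closedBall sbar ρ).norm_image_sub_le_of_norm_hasFDerivWithin_le
        (fun z hz => (hG'' z (hρU hz)).hasFDerivWithinAt) hCb hx hy
    have hkey : ∀ a ∈ Metric.closedBall sbar ρ, ∀ x ∈ Metric.closedBall sbar ρ,
        ∀ y ∈ Metric.closedBall sbar ρ,
        ‖G y - G x - G' a (y - x)‖ ≤ (C * max ‖x - a‖ ‖y - a‖) * ‖y - x‖ := by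
      intro a ha x hx y hy
      have hseg : segment ℝ x y ⊆ Metric.closedBall sbar ρ :=
        (convex_closedBall sbar ρ).segment_subset hx hy
      refine segMVT (G' a) (fun z hz => hG' z (hρU (hseg hz))) ?_
      intro z hz
      calc ‖G' z - G' a‖ ≤ C * ‖z - a‖ := hlip a ha z (hseg hz)
        _ ≤ C * max ‖x - a‖ ‖y - a‖ :=
            mul_le_mul_of_nonneg_left (seg_norm_sub_le hz) hCpos.le
    -- neighborhood where the right inverse exists
    obtain ⟨ε₂, hε₂0, hε₂⟩ : ∃ ε > (0:ℝ), ∀ z, dist z sbar < ε → ‖G' z - G' sbar‖ < θ := by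
      have hten : Tendsto G' (𝓝 sbar) (𝓝 (G' sbar)) := hG'cont sbar hsbarU
      have hev : ∀ᶠ z in 𝓝 sbar, ‖G' z - G' sbar‖ < θ := by
        have := hten (Metric.ball_mem_nhds (G' sbar) hθpos)
        filter_upwards [this] with z hz
        simpa [Metric.mem_ball, dist_eq_norm] using hz
      obtain ⟨ε, hε0, h⟩ := Metric.eventually_nhds_iff.1 hev
      exact ⟨ε, hε0, fun z hz => h hz⟩
    obtain ⟨ε₁, hε₁def⟩ : ∃ c : ℝ, c = min (ε₂ / 2) ρ := ⟨_, rfl⟩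
    have hε₁0 : 0 < ε₁ := hε₁def ▸ lt_min (by linarith) hρ0
    have hε₁ρ : ε₁ ≤ ρ := hε₁def ▸ min_le_right _ _
    have hθball : ∀ z ∈ Metric.closedBall sbar ε₁, ‖G' z - G' sbar‖ ≤ θ := by
      intro z hz
      refine (hε₂ z ?_).le
      calc dist z sbar ≤ ε₁ := Metric.mem_closedBall.1 hz
        _ ≤ ε₂ / 2 := hε₁def ▸ min_le_left _ _
        _ < ε₂ := by linarith
    obtain ⟨δ, hδdef⟩ : ∃ c : ℝ, c = min 1 (min (ε₁ / (2 * (1 + 2 * c₀ * C)))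
      (1 / (2 * c₀ * C * (1 + 2 * c₀ * C)))) := ⟨_, rfl⟩
    have haux1 : (0:ℝ) < 1 + 2 * c₀ * C := by nlinarith [hc₀, hCpos]
    have haux2 : (0:ℝ) < 2 * (1 + 2 * c₀ * C) := by linarith
    have haux3 : (0:ℝ) < 2 * c₀ * C := by nlinarith [hc₀, hCpos]
    have haux4 : (0:ℝ) < 2 * c₀ * C * (1 + 2 * c₀ * C) := mul_pos haux3 haux1
    have hδ0 : 0 < δ := by
      rw [hδdef]
      exact lt_min one_pos (lt_min (div_pos hε₁0 haux2) (div_pos one_pos haux4))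
    obtain ⟨M, hMdef⟩ : ∃ c : ℝ, c = 4 * c₀ * C := ⟨_, rfl⟩
    have hM0 : 0 < M := by rw [hMdef]; nlinarith [hc₀, hCpos]
    refine ⟨δ, hδ0, M, hM0, Metric.ball sbar (ε₁ / 2),
      Metric.ball_mem_nhds sbar (half_pos hε₁0), ?_⟩
    rintro s ⟨hsS, hsV⟩ v hv hvnorm
    have hsV' : dist s sbar < ε₁ / 2 := Metric.mem_ball.1 hsV
    have hsD : s ∈ Metric.closedBall sbar ρ :=
      Metric.mem_closedBall.2 (le_trans hsV'.le (by linarith))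
    have hsU : s ∈ U := hρU hsD
    have hGsK : G s ∈ K := by
      have h7 : s ∈ S ∩ U := ⟨hsS, hsU⟩
      rw [hSrep] at h7
      exact h7.2
    obtain ⟨R, hRinv, hRn⟩ := hRI s (hθball s (Metric.mem_closedBall.2
      (le_trans hsV'.le (by linarith))))
    have hGsv : G' s v = 0 := LinearMap.mem_ker.1 hv
    obtain ⟨f'symm, hf'nn⟩ : ∃ fs : (G' s).NonlinearRightInverse, (fs.nnnorm : ℝ) = c₀ :=
      ⟨{ toFun := fun y => R y
         nnnorm := Real.toNNReal c₀
         bound' := fun y => by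
           calc ‖R y‖ ≤ ‖R‖ * ‖y‖ := R.le_opNorm y
             _ ≤ c₀ * ‖y‖ := mul_le_mul_of_nonneg_right hRn (norm_nonneg y)
             _ = (Real.toNNReal c₀) * ‖y‖ := by rw [Real.coe_toNNReal _ hc₀.le]
         right_inv' := hRinv }, Real.coe_toNNReal _ hc₀.le⟩
    have hexist : ∀ t ∈ Ioc (0:ℝ) δ, ∃ x, x ∈ S ∧
        ‖x - (s + t • v)‖ ≤ 2 * c₀ * C * t ^ 2 := by
      intro t ht
      obtain ⟨ht0, htδ⟩ := ht
      obtain ⟨b, hbdef⟩ : ∃ z : EuclideanSpace ℝ (Fin n), z = s + t • v := ⟨_, rfl⟩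
      obtain ⟨ε, hεdef⟩ : ∃ c : ℝ, c = 2 * c₀ * C * t ^ 2 := ⟨_, rfl⟩
      have hε0 : (0:ℝ) ≤ ε := by rw [hεdef]; nlinarith [sq_nonneg t, haux3]
      have ht1 : t ≤ 1 := le_trans htδ (hδdef ▸ min_le_left _ _)
      have ht2 : t ≤ ε₁ / (2 * (1 + 2 * c₀ * C)) :=
        le_trans htδ (hδdef ▸ le_trans (min_le_right _ _) (min_le_left _ _))
      have ht3 : t ≤ 1 / (2 * c₀ * C * (1 + 2 * c₀ * C)) :=
        le_trans htδ (hδdef ▸ le_trans (min_le_right _ _) (min_le_right _ _))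
      have htsmall1 : t + ε ≤ ε₁ / 2 := by
        have h8 : t * (2 * (1 + 2 * c₀ * C)) ≤ ε₁ := by
          rw [← le_div_iff₀ haux2]
          exact ht2
        have h9 : ε ≤ 2 * c₀ * C * t := by
          rw [hεdef]
          nlinarith [hc₀, hCpos, ht1, ht0.le]
        linarith
      have htsmall2 : C * (t + ε) ≤ 1 / (2 * c₀) := by
        have h8 : t * (2 * c₀ * C * (1 + 2 * c₀ * C)) ≤ 1 := by
          rw [← le_div_iff₀ haux4]
          exact ht3
        have h9 : ε ≤ 2 * c₀ * C * t := by
          rw [hεdef]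
          nlinarith [hc₀, hCpos, ht1, ht0.le]
        have h10 : C * (t + ε) ≤ C * t * (1 + 2 * c₀ * C) := by
          nlinarith [mul_le_mul_of_nonneg_left h9 hCpos.le]
        refine le_trans h10 ?_
        rw [le_div_iff₀ (by linarith : (0:ℝ) < 2 * c₀)]
        have h11 : C * t * (1 + 2 * c₀ * C) * (2 * c₀) = t * (2 * c₀ * C * (1 + 2 * c₀ * C)) := by
          ring
        rw [h11]
        exact h8
      have hbs : ‖b - s‖ = t := by
        rw [hbdef, add_sub_cancel_left, norm_smul, hvnorm, Real.norm_of_nonneg ht0.le, mul_one]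
      have hball : Metric.closedBall b ε ⊆ Metric.closedBall sbar ε₁ := by
        intro z hz
        rw [Metric.mem_closedBall] at hz ⊢
        calc dist z sbar ≤ dist z b + dist b s + dist s sbar := dist_triangle4 z b s sbar
          _ ≤ ε + t + ε₁ / 2 := by
              refine add_le_add (add_le_add hz ?_) hsV'.le
              rw [dist_eq_norm, hbs]
          _ ≤ ε₁ := by linarith
      have hballD : Metric.closedBall b ε ⊆ Metric.closedBall sbar ρ :=
        hball.trans (Metric.closedBall_subset_closedBall hε₁ρ)
      have hxs : ∀ x ∈ Metric.closedBall b ε, ‖x - s‖ ≤ t + ε := by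
        intro x hx
        calc ‖x - s‖ = ‖(x - b) + (b - s)‖ := by abel_nf
          _ ≤ ‖x - b‖ + ‖b - s‖ := norm_add_le _ _
          _ ≤ ε + t := by
              refine add_le_add ?_ (le_of_eq hbs)
              rw [← dist_eq_norm]
              exact Metric.mem_closedBall.1 hx
          _ = t + ε := by ring
      obtain ⟨κ, hκdef⟩ : ∃ c : NNReal, c = Real.toNNReal (1 / (2 * c₀)) := ⟨_, rfl⟩
      have hκ : (κ : ℝ) = 1 / (2 * c₀) := by
        rw [hκdef]
        exact Real.coe_toNNReal _ (le_of_lt (div_pos one_pos (by linarith)))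
      have happrox : ApproximatesLinearOn G (G' s) (Metric.closedBall b ε) κ := by
        intro x hx y hy
        have h10 := hkey s hsD y (hballD hy) x (hballD hx)
        refine le_trans h10 ?_
        rw [hκ]
        refine mul_le_mul_of_nonneg_right ?_ (norm_nonneg _)
        refine le_trans ?_ htsmall2
        refine mul_le_mul_of_nonneg_left ?_ hCpos.le
        exact max_le (hxs y hy) (hxs x hx)
      have hsurjOn := happrox.surjOn_closedBall_of_nonlinearRightInverse f'symm hε0
        (subset_refl _)
      have hbD : b ∈ Metric.closedBall sbar ρ := hballD (Metric.mem_closedBall_self hε0)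
      have hGb : ‖G s - G b‖ ≤ C * t ^ 2 := by
        have h11 := hkey s hsD s hsD b hbD
        have hbs2 : b - s = t • v := by rw [hbdef]; abel
        have hker : G' s (b - s) = 0 := by
          rw [hbs2, map_smul, hGsv, smul_zero]
        rw [hker, sub_zero] at h11
        have h12 : max ‖s - s‖ ‖b - s‖ = t := by
          rw [sub_self, norm_zero, hbs]
          exact max_eq_right ht0.le
        rw [h12, hbs] at h11
        calc ‖G s - G b‖ = ‖G b - G s‖ := norm_sub_rev _ _
          _ ≤ C * t * t := h11
          _ = C * t ^ 2 := by ring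
      have hmem : G s ∈ Metric.closedBall (G b) (((f'symm.nnnorm : ℝ)⁻¹ - κ) * ε) := by
        rw [Metric.mem_closedBall, dist_eq_norm]
        have h13 : ((f'symm.nnnorm : ℝ)⁻¹ - (κ : ℝ)) * ε = C * t ^ 2 := by
          rw [hf'nn, hκ, hεdef]
          field_simp
          ring
        rw [h13]
        exact hGb
      obtain ⟨x, hxball, hfx⟩ := hsurjOn hmem
      have hxU : x ∈ U := hρU (hballD hxball)
      have hxS : x ∈ S := by
        have h14 : x ∈ {z ∈ U | G z ∈ K} := ⟨hxU, by rw [hfx]; exact hGsK⟩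
        rw [← hSrep] at h14
        exact h14.1
      refine ⟨x, hxS, ?_⟩
      rw [← hbdef, ← hεdef, ← dist_eq_norm]
      exact Metric.mem_closedBall.1 hxball
    choose! xfun hxfun using hexist
    refine ⟨fun t => if t ∈ Ioc (0:ℝ) δ then (2 / t ^ 2) • (xfun t - (s + t • v)) else 0, ?_⟩
    rintro t ⟨ht0, htδ⟩
    by_cases ht : t ∈ Ioc (0:ℝ) δ
    · have htpos : 0 < t := ht.1
      have htne : t ≠ 0 := ne_of_gt htpos
      obtain ⟨hxS, hxnorm⟩ := hxfun t ht
      simp only [if_pos ht]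
      constructor
      · rw [norm_smul, Real.norm_of_nonneg (le_of_lt (div_pos two_pos (pow_pos htpos 2)))]
        calc 2 / t ^ 2 * ‖xfun t - (s + t • v)‖ ≤ 2 / t ^ 2 * (2 * c₀ * C * t ^ 2) :=
            mul_le_mul_of_nonneg_left hxnorm (le_of_lt (div_pos two_pos (pow_pos htpos 2)))
          _ = M := by
              rw [hMdef]
              field_simp
              ring
      · have h15 : s + t • v + (t ^ 2 / 2) • ((2 / t ^ 2) • (xfun t - (s + t • v)))
            = xfun t := by
          rw [smul_smul, show t ^ 2 / 2 * (2 / t ^ 2) = 1 by field_simp, one_smul]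
          abel
        rw [h15]
        exact hxS
    · have htz : t = 0 := by
        by_contra h
        exact ht ⟨lt_of_le_of_ne ht0 (Ne.symm h), htδ⟩
      subst htz
      simp only [if_neg ht]
      constructor
      · simpa using hM0.le
      · simpa using hsS
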